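/- For every choice of finite nonempty sets A, B, X, Y and every conditional probability distribution P(a, b | x, y) (nonnegative, with Σ_{a,b} P(a, b | x, y) = 1 for each (x, y)), there exist finite nonempty wire index sets I'_A, O_A, I_A, O'_A, I'_B, O_B, I_B, O'_B, a bipartite process tensor W, and sets of probabilistic local operations T^{A|X} on Alice's wires (incoming (I'_A, O_A), outgoing (I_A, O'_A)) and T^{B|Y} on Bob's wires (incoming (I'_B, O_B), outgoing (I_B, O'_B)), such that the contraction (T^{A|X} ⊗ T^{B|Y}) * W over all eight wire indices equals P. In particular, every conditional probability distribution, including the perfect two-way signaling distribution δ_{a,y}·δ_{b,x}, is a process tensor correlation. -/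

import Mathlib

open Finset
open scoped Classical

noncomputable section

namespace Boxworld

/-- A bipartite 8-wire tensor `W(i'_A, o_A, i'_B, o_B | i_A, o'_A, i_B, o'_B)`,
with output indices `IA' OA IB' OB` and input indices `IA OA' IB OB'`. -/
abbrev WTen (IA' OA IB' OB IA OA' IB OB' : Type) : Type :=
  IA' → OA → IB' → OB → IA → OA' → IB → OB' → ℝ

/-- A local-operation tensor `T(i, o' | i', o)`, argument order `(i', o, i, o')`. -/
abbrev OpTen (I' O I O' : Type) : Type := I' → O → I → O' → ℝ

section WireDefs

variable {IA' OA IB' OB IA OA' IB OB' : Type}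
variable [Fintype IA'] [Fintype OA] [Fintype IB'] [Fintype OB]
variable [Fintype IA] [Fintype OA'] [Fintype IB] [Fintype OB']

/-- Reduce-and-replace over the index `IA'`. -/
def rrIA' (W : WTen IA' OA IB' OB IA OA' IB OB') : WTen IA' OA IB' OB IA OA' IB OB' :=
  fun _ oa ib' ob ia oa' ib ob' => (∑ j, W j oa ib' ob ia oa' ib ob') / (Fintype.card IA' : ℝ)

/-- Reduce-and-replace over the index `OA`. -/
def rrOA (W : WTen IA' OA IB' OB IA OA' IB OB') : WTen IA' OA IB' OB IA OA' IB OB' :=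
  fun ia' _ ib' ob ia oa' ib ob' => (∑ j, W ia' j ib' ob ia oa' ib ob') / (Fintype.card OA : ℝ)

/-- Reduce-and-replace over the index `IB'`. -/
def rrIB' (W : WTen IA' OA IB' OB IA OA' IB OB') : WTen IA' OA IB' OB IA OA' IB OB' :=
  fun ia' oa _ ob ia oa' ib ob' => (∑ j, W ia' oa j ob ia oa' ib ob') / (Fintype.card IB' : ℝ)

/-- Reduce-and-replace over the index `OB`. -/
def rrOB (W : WTen IA' OA IB' OB IA OA' IB OB') : WTen IA' OA IB' OB IA OA' IB OB' :=
  fun ia' oa ib' _ ia oa' ib ob' => (∑ j, W ia' oa ib' j ia oa' ib ob') / (Fintype.card OB : ℝ)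

/-- Reduce-and-replace over the index `IA`. -/
def rrIA (W : WTen IA' OA IB' OB IA OA' IB OB') : WTen IA' OA IB' OB IA OA' IB OB' :=
  fun ia' oa ib' ob _ oa' ib ob' => (∑ j, W ia' oa ib' ob j oa' ib ob') / (Fintype.card IA : ℝ)

/-- Reduce-and-replace over the index `OA'`. -/
def rrOA' (W : WTen IA' OA IB' OB IA OA' IB OB') : WTen IA' OA IB' OB IA OA' IB OB' :=
  fun ia' oa ib' ob ia _ ib ob' => (∑ j, W ia' oa ib' ob ia j ib ob') / (Fintype.card OA' : ℝ)

/-- Reduce-and-replace over the index `IB`. -/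
def rrIB (W : WTen IA' OA IB' OB IA OA' IB OB') : WTen IA' OA IB' OB IA OA' IB OB' :=
  fun ia' oa ib' ob ia oa' _ ob' => (∑ j, W ia' oa ib' ob ia oa' j ob') / (Fintype.card IB : ℝ)

/-- Reduce-and-replace over the index `OB'`. -/
def rrOB' (W : WTen IA' OA IB' OB IA OA' IB OB') : WTen IA' OA IB' OB IA OA' IB OB' :=
  fun ia' oa ib' ob ia oa' ib _ => (∑ j, W ia' oa ib' ob ia oa' ib j) / (Fintype.card OB' : ℝ)

/-- Total reduction `r(W)`: the sum of all entries of `W`. -/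
def tot (W : WTen IA' OA IB' OB IA OA' IB OB') : ℝ :=
  ∑ ia', ∑ oa, ∑ ib', ∑ ob, ∑ ia, ∑ oa', ∑ ib, ∑ ob', W ia' oa ib' ob ia oa' ib ob'

/-- Elementwise nonnegativity `W ≥ 0`. -/
def Nonneg8 (W : WTen IA' OA IB' OB IA OA' IB OB') : Prop :=
  ∀ ia' oa ib' ob ia oa' ib ob', 0 ≤ W ia' oa ib' ob ia oa' ib ob'

/-- Reduce-and-replace over all of Alice's indices `𝔸 = I'_A I_A O_A O'_A`. -/
def rrA (W : WTen IA' OA IB' OB IA OA' IB OB') : WTen IA' OA IB' OB IA OA' IB OB' :=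
  rrIA' (rrIA (rrOA (rrOA' W)))

/-- Reduce-and-replace over all of Bob's indices `𝔹 = I'_B I_B O_B O'_B`. -/
def rrB (W : WTen IA' OA IB' OB IA OA' IB OB') : WTen IA' OA IB' OB IA OA' IB OB' :=
  rrIB' (rrIB (rrOB (rrOB' W)))

/-- The combination `_{(1 − O'_A + O_A O'_A − I_A O_A O'_A)}W`. -/
def LA (W : WTen IA' OA IB' OB IA OA' IB OB') : WTen IA' OA IB' OB IA OA' IB OB' :=
  W - rrOA' W + rrOA (rrOA' W) - rrIA (rrOA (rrOA' W))

/-- The combination `_{(1 − O'_B + O_B O'_B − I_B O_B O'_B)}W`. -/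
def LB (W : WTen IA' OA IB' OB IA OA' IB OB') : WTen IA' OA IB' OB IA OA' IB OB' :=
  W - rrOB' W + rrOB (rrOB' W) - rrIB (rrOB (rrOB' W))

/-- A bipartite process tensor. -/
def IsProcessTensor (W : WTen IA' OA IB' OB IA OA' IB OB') : Prop :=
  Nonneg8 W ∧
  tot W = (Fintype.card IA : ℝ) * (Fintype.card OA' : ℝ) *
      (Fintype.card IB : ℝ) * (Fintype.card OB' : ℝ) ∧
  rrA (LB W) = 0 ∧
  rrB (LA W) = 0 ∧
  LA (LB W) = 0

/-- Reduce-and-replace over all primed indices `O'_A O'_B I'_A I'_B`. -/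
def rrPrimes (W : WTen IA' OA IB' OB IA OA' IB OB') : WTen IA' OA IB' OB IA OA' IB OB' :=
  rrOA' (rrOB' (rrIA' (rrIB' W)))

/-- The combination `_{(1 − O'_A + O'_A I'_A − O'_B O'_A I'_A)}W`. -/
def MA (W : WTen IA' OA IB' OB IA OA' IB OB') : WTen IA' OA IB' OB IA OA' IB OB' :=
  W - rrOA' W + rrIA' (rrOA' W) - rrOB' (rrIA' (rrOA' W))

/-- The combination `_{(1 − O'_B + O'_B I'_B − O'_A O'_B I'_B)}W`. -/
def MB (W : WTen IA' OA IB' OB IA OA' IB OB') : WTen IA' OA IB' OB IA OA' IB OB' :=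
  W - rrOB' W + rrIB' (rrOB' W) - rrOA' (rrIB' (rrOB' W))

/-- The four nonsignaling-preservation (NSP) conditions. -/
def SatisfiesNSP (W : WTen IA' OA IB' OB IA OA' IB OB') : Prop :=
  rrOA (rrPrimes W) = rrIA (rrOA (rrPrimes W)) ∧
  rrOB (rrPrimes W) = rrIB (rrOB (rrPrimes W)) ∧
  rrOA (MA W) = rrIA (rrOA (MA W)) ∧
  rrOB (MB W) = rrIB (rrOB (MB W))

/-- A boxworld process. -/
def IsBoxworldProcess (W : WTen IA' OA IB' OB IA OA' IB OB') : Prop :=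
  Nonneg8 W ∧
  tot W = (Fintype.card IA : ℝ) * (Fintype.card OA' : ℝ) *
      (Fintype.card IB : ℝ) * (Fintype.card OB' : ℝ) ∧
  rrA W = rrOB' (rrA W) ∧
  rrB W = rrOA' (rrB W) ∧
  W = rrOA' W + rrOB' W - rrOA' (rrOB' W) ∧
  rrOA W = rrIA (rrOA W) ∧
  rrOB W = rrIB (rrOB W)

/-- The action `W * P` of a process tensor on a bipartite box
`P(o'_A, o'_B | i'_A, i'_B)`, contracting the indices `O'_A, O'_B, I'_A, I'_B`. -/
def actOnBox (W : WTen IA' OA IB' OB IA OA' IB OB')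
    (P : OA' → OB' → IA' → IB' → ℝ) : OA → OB → IA → IB → ℝ :=
  fun oa ob ia ib =>
    ∑ ia', ∑ ib', ∑ oa', ∑ ob', W ia' oa ib' ob ia oa' ib ob' * P oa' ob' ia' ib'

end WireDefs

section OpDefs

variable {I' O I O' : Type}
variable [Fintype I'] [Fintype O] [Fintype I] [Fintype O']

/-- Reduce-and-replace over the index `I'` of an operation tensor. -/
def rrOpI' (T : OpTen I' O I O') : OpTen I' O I O' :=
  fun _ o i o' => (∑ j, T j o i o') / (Fintype.card I' : ℝ)

/-- Reduce-and-replace over the index `O` of an operation tensor. -/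
def rrOpO (T : OpTen I' O I O') : OpTen I' O I O' :=
  fun i' _ i o' => (∑ j, T i' j i o') / (Fintype.card O : ℝ)

/-- Reduce-and-replace over the index `I` of an operation tensor. -/
def rrOpI (T : OpTen I' O I O') : OpTen I' O I O' :=
  fun i' o _ o' => (∑ j, T i' o j o') / (Fintype.card I : ℝ)

/-- Reduce-and-replace over the index `O'` of an operation tensor. -/
def rrOpO' (T : OpTen I' O I O') : OpTen I' O I O' :=
  fun i' o i _ => (∑ j, T i' o i j) / (Fintype.card O' : ℝ)

/-- Total reduction of an operation tensor. -/
def totOp (T : OpTen I' O I O') : ℝ := ∑ i', ∑ o, ∑ i, ∑ o', T i' o i o'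

/-- A deterministic local operation. -/
def IsDetOp (T : OpTen I' O I O') : Prop :=
  totOp T = (Fintype.card I' : ℝ) * (Fintype.card O : ℝ) ∧
  rrOpI (rrOpO' T) = rrOpI' (rrOpI (rrOpO (rrOpO' T))) ∧
  rrOpO' T = rrOpO (rrOpO' T)

/-- A set of probabilistic local operations `T^{a|x}(i, o' | i', o)`:
nonnegative tensors whose sum over the classical outcome `a` is, for each
classical input `x`, a deterministic local operation. -/
def IsLocalOps {A X : Type} [Fintype A] (T : A → X → OpTen I' O I O') : Prop :=
  (∀ a x i' o i o', 0 ≤ T a x i' o i o') ∧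
  ∀ x, IsDetOp (fun i' o i o' => ∑ a, T a x i' o i o')

/-- A nonsignaling set of probabilistic local operations: either the
deterministic operation `T^x` is independent of `x` (case 1), or it is a
convex combination of deterministic pre-processings `f_λ` (possibly depending
on `x`) and post-processings `g_λ` independent of both the box output and `x`
(case 2). -/
def IsNSLocalOps {A X : Type} [Fintype A] (T : A → X → OpTen I' O I O') : Prop :=
  IsLocalOps T ∧
  ((∀ x x' i' o i o', (∑ a, T a x i' o i o') = ∑ a, T a x' i' o i o') ∨
    ∃ (m : ℕ) (π : Fin m → ℝ) (f : Fin m → I' → X → I) (g : Fin m → I' → O'),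
      (∀ l, 0 ≤ π l) ∧ (∑ l, π l = 1) ∧
      ∀ x i' o i o', (∑ a, T a x i' o i o') =
        ∑ l, π l * ((if i = f l i' x then (1 : ℝ) else 0) *
          (if o' = g l i' then (1 : ℝ) else 0)))

end OpDefs

/-- A bipartite nonsignaling box `P(o_1, o_2 | i_1, i_2)`. -/
def IsNSBox {O1 O2 I1 I2 : Type} [Fintype O1] [Fintype O2]
    (P : O1 → O2 → I1 → I2 → ℝ) : Prop :=
  (∀ o1 o2 i1 i2, 0 ≤ P o1 o2 i1 i2) ∧
  (∀ i1 i2, ∑ o1, ∑ o2, P o1 o2 i1 i2 = 1) ∧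
  (∀ o1 i1 i2 i2', ∑ o2, P o1 o2 i1 i2 = ∑ o2, P o1 o2 i1 i2') ∧
  (∀ o2 i1 i1' i2, ∑ o1, P o1 o2 i1 i2 = ∑ o1, P o1 o2 i1' i2)

section Corr

variable {IA' OA IB' OB IA OA' IB OB' : Type}
variable [Fintype IA'] [Fintype OA] [Fintype IB'] [Fintype OB]
variable [Fintype IA] [Fintype OA'] [Fintype IB] [Fintype OB']
variable {A X B Y : Type}

/-- The correlations `(T^{A|X} ⊗ T^{B|Y}) * W` generated by local operations
acting on a process tensor: contraction over all eight wire indices. -/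
def corr (TA : A → X → OpTen IA' OA IA OA') (TB : B → Y → OpTen IB' OB IB OB')
    (W : WTen IA' OA IB' OB IA OA' IB OB') (a : A) (b : B) (x : X) (y : Y) : ℝ :=
  ∑ ia', ∑ oa, ∑ ib', ∑ ob, ∑ ia, ∑ oa', ∑ ib, ∑ ob',
    TA a x ia' oa ia oa' * TB b y ib' ob ib ob' * W ia' oa ib' ob ia oa' ib ob'

end Corr

theorem statement_2
    (A B X Y : Type) [Fintype A] [Nonempty A] [Fintype B] [Nonempty B]
    [Fintype X] [Nonempty X] [Fintype Y] [Nonempty Y]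
    (P : A → B → X → Y → ℝ)
    (hpos : ∀ a b x y, 0 ≤ P a b x y)
    (hnorm : ∀ x y, ∑ a, ∑ b, P a b x y = 1) :
    ∃ (n1 n2 n3 n4 n5 n6 n7 n8 : ℕ)
      (W : WTen (Fin (n1+1)) (Fin (n2+1)) (Fin (n3+1)) (Fin (n4+1)) (Fin (n5+1)) (Fin (n6+1)) (Fin (n7+1)) (Fin (n8+1)))
      (TA : A → X → OpTen (Fin (n1+1)) (Fin (n2+1)) (Fin (n5+1)) (Fin (n6+1)))
      (TB : B → Y → OpTen (Fin (n3+1)) (Fin (n4+1)) (Fin (n7+1)) (Fin (n8+1))),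
      IsProcessTensor W ∧ IsLocalOps TA ∧ IsLocalOps TB ∧
      ∀ a b x y, corr TA TB W a b x y = P a b x y := by
  obtain ⟨nA, hA⟩ := Nat.exists_eq_succ_of_ne_zero (Fintype.card_ne_zero (α := A))
  obtain ⟨nB, hB⟩ := Nat.exists_eq_succ_of_ne_zero (Fintype.card_ne_zero (α := B))
  obtain ⟨nX, hX⟩ := Nat.exists_eq_succ_of_ne_zero (Fintype.card_ne_zero (α := X))
  obtain ⟨nY, hY⟩ := Nat.exists_eq_succ_of_ne_zero (Fintype.card_ne_zero (α := Y))
  have eA : Fin (nA+1) ≃ A := (Fintype.equivFinOfCardEq hA).symm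
  have eB : Fin (nB+1) ≃ B := (Fintype.equivFinOfCardEq hB).symm
  have eX : Fin (nX+1) ≃ X := (Fintype.equivFinOfCardEq hX).symm
  have eY : Fin (nY+1) ≃ Y := (Fintype.equivFinOfCardEq hY).symm
  have fin1 : ∀ (f : Fin (0+1) → ℝ), (∑ j, f j) = f 0 := fun f => Fin.sum_univ_one f
  have hQ1 : ∀ (ia : Fin (nX+1)) (ib : Fin (nY+1)),
      (∑ oa : Fin (nA+1), ∑ ob : Fin (nB+1), P (eA oa) (eB ob) (eX ia) (eY ib)) = 1 := by
    intro ia ib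
    calc (∑ oa : Fin (nA+1), ∑ ob : Fin (nB+1), P (eA oa) (eB ob) (eX ia) (eY ib))
        = ∑ oa : Fin (nA+1), ∑ b, P (eA oa) b (eX ia) (eY ib) :=
          Finset.sum_congr rfl fun oa _ =>
            Equiv.sum_comp eB (fun b => P (eA oa) b (eX ia) (eY ib))
      _ = ∑ a, ∑ b, P a b (eX ia) (eY ib) :=
          Equiv.sum_comp eA (fun a => ∑ b, P a b (eX ia) (eY ib))
      _ = 1 := hnorm _ _
  have hQ1' : ∀ (ia : Fin (nX+1)) (ib : Fin (nY+1)),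
      (∑ ob : Fin (nB+1), ∑ oa : Fin (nA+1), P (eA oa) (eB ob) (eX ia) (eY ib)) = 1 := by
    intro ia ib; rw [Finset.sum_comm]; exact hQ1 ia ib
  have hB0 : ((nB : ℝ) + 1) ≠ 0 := by positivity
  have hA0 : ((nA : ℝ) + 1) ≠ 0 := by positivity
  have hX0 : ((nX : ℝ) + 1) ≠ 0 := by positivity
  have hY0 : ((nY : ℝ) + 1) ≠ 0 := by positivity
  set W0 : WTen (Fin (0+1)) (Fin (nA+1)) (Fin (0+1)) (Fin (nB+1)) (Fin (nX+1)) (Fin (0+1))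
      (Fin (nY+1)) (Fin (0+1)) :=
    (fun _ oa _ ob ia _ ib _ => P (eA oa) (eB ob) (eX ia) (eY ib)) with hW0
  set TA0 : A → X → OpTen (Fin (0+1)) (Fin (nA+1)) (Fin (nX+1)) (Fin (0+1)) :=
    (fun a x _ oa ia _ =>
      (if ia = eX.symm x then (1:ℝ) else 0) * (if oa = eA.symm a then (1:ℝ) else 0)) with hTA0
  set TB0 : B → Y → OpTen (Fin (0+1)) (Fin (nB+1)) (Fin (nY+1)) (Fin (0+1)) :=
    (fun b y _ ob ib _ =>
      (if ib = eY.symm y then (1:ℝ) else 0) * (if ob = eB.symm b then (1:ℝ) else 0)) with hTB0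
  have sub8 : ∀ (f g : WTen (Fin (0+1)) (Fin (nA+1)) (Fin (0+1)) (Fin (nB+1)) (Fin (nX+1))
      (Fin (0+1)) (Fin (nY+1)) (Fin (0+1))) i1 i2 i3 i4 i5 i6 i7 i8,
      (f - g) i1 i2 i3 i4 i5 i6 i7 i8 = f i1 i2 i3 i4 i5 i6 i7 i8 - g i1 i2 i3 i4 i5 i6 i7 i8 :=
    fun _ _ _ _ _ _ _ _ _ _ => rfl
  have add8 : ∀ (f g : WTen (Fin (0+1)) (Fin (nA+1)) (Fin (0+1)) (Fin (nB+1)) (Fin (nX+1))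
      (Fin (0+1)) (Fin (nY+1)) (Fin (0+1))) i1 i2 i3 i4 i5 i6 i7 i8,
      (f + g) i1 i2 i3 i4 i5 i6 i7 i8 = f i1 i2 i3 i4 i5 i6 i7 i8 + g i1 i2 i3 i4 i5 i6 i7 i8 :=
    fun _ _ _ _ _ _ _ _ _ _ => rfl
  have zero8 : ∀ (i1 : Fin (0+1)) (i2 : Fin (nA+1)) (i3 : Fin (0+1)) (i4 : Fin (nB+1))
      (i5 : Fin (nX+1)) (i6 : Fin (0+1)) (i7 : Fin (nY+1)) (i8 : Fin (0+1)),
      (0 : WTen (Fin (0+1)) (Fin (nA+1)) (Fin (0+1)) (Fin (nB+1)) (Fin (nX+1))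
        (Fin (0+1)) (Fin (nY+1)) (Fin (0+1))) i1 i2 i3 i4 i5 i6 i7 i8 = 0 :=
    fun _ _ _ _ _ _ _ _ => rfl
  -- closed form of LB W0
  have hLB : LB W0 = (fun (_ : Fin (0+1)) (oa : Fin (nA+1)) (_ : Fin (0+1)) (_ : Fin (nB+1))
      (ia : Fin (nX+1)) (_ : Fin (0+1)) (ib : Fin (nY+1)) (_ : Fin (0+1)) =>
      (∑ ob : Fin (nB+1), P (eA oa) (eB ob) (eX ia) (eY ib)) / ((nB:ℝ)+1)
        - (∑ ib2 : Fin (nY+1),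
            (∑ ob : Fin (nB+1), P (eA oa) (eB ob) (eX ia) (eY ib2)) / ((nB:ℝ)+1)) / ((nY:ℝ)+1)) := by
    funext ia' oa ib' ob ia oa' ib ob'
    simp only [LB, sub8, add8]
    simp only [rrOB', rrOB, rrIB, hW0, fin1, Fintype.card_fin, Nat.reduceAdd, Nat.cast_one,
      div_one]
    push_cast
    ring
  have hGsum : ∀ (ia : Fin (nX+1)) (ib : Fin (nY+1)),
      (∑ oa : Fin (nA+1),
        ((∑ ob : Fin (nB+1), P (eA oa) (eB ob) (eX ia) (eY ib)) / ((nB:ℝ)+1)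
          - (∑ ib2 : Fin (nY+1),
              (∑ ob : Fin (nB+1), P (eA oa) (eB ob) (eX ia) (eY ib2)) / ((nB:ℝ)+1)) / ((nY:ℝ)+1)))
        = 0 := by
    intro ia ib
    have h2 : ∀ ib2 : Fin (nY+1),
        (∑ oa : Fin (nA+1),
          (∑ ob : Fin (nB+1), P (eA oa) (eB ob) (eX ia) (eY ib2)) / ((nB:ℝ)+1))
          = 1 / ((nB:ℝ)+1) := by
      intro ib2; rw [← Finset.sum_div, hQ1 ia ib2]
    rw [Finset.sum_sub_distrib]
    rw [show (∑ oa : Fin (nA+1),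
        (∑ ob : Fin (nB+1), P (eA oa) (eB ob) (eX ia) (eY ib)) / ((nB:ℝ)+1)) = 1/((nB:ℝ)+1)
      from h2 ib]
    rw [← Finset.sum_div, Finset.sum_comm]
    rw [Finset.sum_congr rfl (fun ib2 _ => h2 ib2)]
    rw [Finset.sum_const, Finset.card_univ, Fintype.card_fin, nsmul_eq_mul]
    push_cast
    field_simp
    ring
  -- closed form of LA W0
  have hLA : LA W0 = (fun (_ : Fin (0+1)) (_ : Fin (nA+1)) (_ : Fin (0+1)) (ob : Fin (nB+1))
      (ia : Fin (nX+1)) (_ : Fin (0+1)) (ib : Fin (nY+1)) (_ : Fin (0+1)) =>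
      (∑ oa : Fin (nA+1), P (eA oa) (eB ob) (eX ia) (eY ib)) / ((nA:ℝ)+1)
        - (∑ ia2 : Fin (nX+1),
            (∑ oa : Fin (nA+1), P (eA oa) (eB ob) (eX ia2) (eY ib)) / ((nA:ℝ)+1)) / ((nX:ℝ)+1)) := by
    funext ia' oa ib' ob ia oa' ib ob'
    simp only [LA, sub8, add8]
    simp only [rrOA', rrOA, rrIA, hW0, fin1, Fintype.card_fin, Nat.reduceAdd, Nat.cast_one,
      div_one]
    push_cast
    ring
  have hHsum : ∀ (ia : Fin (nX+1)) (ib : Fin (nY+1)),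
      (∑ ob : Fin (nB+1),
        ((∑ oa : Fin (nA+1), P (eA oa) (eB ob) (eX ia) (eY ib)) / ((nA:ℝ)+1)
          - (∑ ia2 : Fin (nX+1),
              (∑ oa : Fin (nA+1), P (eA oa) (eB ob) (eX ia2) (eY ib)) / ((nA:ℝ)+1)) / ((nX:ℝ)+1)))
        = 0 := by
    intro ia ib
    have h2 : ∀ ia2 : Fin (nX+1),
        (∑ ob : Fin (nB+1),
          (∑ oa : Fin (nA+1), P (eA oa) (eB ob) (eX ia2) (eY ib)) / ((nA:ℝ)+1))
          = 1 / ((nA:ℝ)+1) := by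
      intro ia2; rw [← Finset.sum_div, hQ1' ia2 ib]
    rw [Finset.sum_sub_distrib]
    rw [show (∑ ob : Fin (nB+1),
        (∑ oa : Fin (nA+1), P (eA oa) (eB ob) (eX ia) (eY ib)) / ((nA:ℝ)+1)) = 1/((nA:ℝ)+1)
      from h2 ia]
    rw [← Finset.sum_div, Finset.sum_comm]
    rw [Finset.sum_congr rfl (fun ia2 _ => h2 ia2)]
    rw [Finset.sum_const, Finset.card_univ, Fintype.card_fin, nsmul_eq_mul]
    push_cast
    field_simp
    ring
  refine ⟨0, nA, 0, nB, nX, 0, nY, 0, W0, TA0, TB0, ?_, ?_, ?_, ?_⟩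
  · -- IsProcessTensor W0
    refine ⟨?_, ?_, ?_, ?_, ?_⟩
    · intro ia' oa ib' ob ia oa' ib ob'
      simp only [hW0]
      exact hpos _ _ _ _
    · -- total reduction
      have swap : (∑ oa : Fin (nA+1), ∑ ob : Fin (nB+1), ∑ ia : Fin (nX+1), ∑ ib : Fin (nY+1),
            P (eA oa) (eB ob) (eX ia) (eY ib))
          = ∑ ia : Fin (nX+1), ∑ ib : Fin (nY+1), ∑ oa : Fin (nA+1), ∑ ob : Fin (nB+1),
            P (eA oa) (eB ob) (eX ia) (eY ib) := by
        calc (∑ oa : Fin (nA+1), ∑ ob : Fin (nB+1), ∑ ia : Fin (nX+1), ∑ ib : Fin (nY+1),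
              P (eA oa) (eB ob) (eX ia) (eY ib))
            = ∑ oa : Fin (nA+1), ∑ ia : Fin (nX+1), ∑ ob : Fin (nB+1), ∑ ib : Fin (nY+1),
              P (eA oa) (eB ob) (eX ia) (eY ib) :=
              Finset.sum_congr rfl fun oa _ => by rw [Finset.sum_comm]
          _ = ∑ ia : Fin (nX+1), ∑ oa : Fin (nA+1), ∑ ob : Fin (nB+1), ∑ ib : Fin (nY+1),
              P (eA oa) (eB ob) (eX ia) (eY ib) := by rw [Finset.sum_comm]
          _ = ∑ ia : Fin (nX+1), ∑ oa : Fin (nA+1), ∑ ib : Fin (nY+1), ∑ ob : Fin (nB+1),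
              P (eA oa) (eB ob) (eX ia) (eY ib) :=
              Finset.sum_congr rfl fun ia _ => Finset.sum_congr rfl fun oa _ => by
                rw [Finset.sum_comm]
          _ = ∑ ia : Fin (nX+1), ∑ ib : Fin (nY+1), ∑ oa : Fin (nA+1), ∑ ob : Fin (nB+1),
              P (eA oa) (eB ob) (eX ia) (eY ib) :=
              Finset.sum_congr rfl fun ia _ => by rw [Finset.sum_comm]
      simp only [tot, hW0, fin1]
      rw [swap]
      simp only [hQ1]
      simp [Finset.sum_const, Finset.card_univ, Fintype.card_fin]
      ring
    · -- rrA (LB W0) = 0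
      rw [hLB]
      funext ia' oa ib' ob ia oa' ib ob'
      simp only [rrA, rrIA', rrIA, rrOA, rrOA', fin1, Fintype.card_fin, zero8,
        Nat.reduceAdd, Nat.cast_one, div_one]
      simp only [hGsum]
      simp
    · -- rrB (LA W0) = 0
      rw [hLA]
      funext ia' oa ib' ob ia oa' ib ob'
      simp only [rrB, rrIB', rrIB, rrOB, rrOB', fin1, Fintype.card_fin, zero8,
        Nat.reduceAdd, Nat.cast_one, div_one]
      simp only [hHsum]
      simp
    · -- LA (LB W0) = 0
      rw [hLB]
      funext ia' oa ib' ob ia oa' ib ob'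
      simp only [LA, sub8, add8, rrOA', rrOA, rrIA, fin1, Fintype.card_fin, zero8,
        Nat.reduceAdd, Nat.cast_one, div_one]
      simp only [hGsum]
      simp
  · -- IsLocalOps TA0
    constructor
    · intro a x i' o i o'
      simp only [hTA0]
      apply mul_nonneg <;> split <;> norm_num
    · intro x
      have hTx : (fun (i' : Fin (0+1)) (o : Fin (nA+1)) (i : Fin (nX+1)) (o' : Fin (0+1)) =>
            ∑ a, TA0 a x i' o i o')
          = (fun _ _ i _ => if i = eX.symm x then (1:ℝ) else 0) := by
        funext i' o i o'
        simp only [hTA0]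
        rw [← Finset.mul_sum]
        have h1 : (∑ a, if o = eA.symm a then (1:ℝ) else 0) = 1 := by
          simp [Equiv.eq_symm_apply]
        rw [h1, mul_one]
      rw [hTx]
      refine ⟨?_, ?_, ?_⟩
      · simp [totOp, fin1, Fintype.card_fin]
      · funext i' o i o'
        simp [rrOpI, rrOpI', rrOpO, rrOpO', fin1, Fintype.card_fin]
        rw [← Finset.sum_div]
        simp [div_self hA0, one_div]
      · funext i' o i o'
        simp only [rrOpO', rrOpO, fin1, Fintype.card_fin, Nat.cast_one]
        rw [Finset.sum_const, Finset.card_univ, Fintype.card_fin, nsmul_eq_mul]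
        push_cast
        rw [mul_div_cancel_left₀ _ hA0]
  · -- IsLocalOps TB0
    constructor
    · intro b y i' o i o'
      simp only [hTB0]
      apply mul_nonneg <;> split <;> norm_num
    · intro y
      have hTy : (fun (i' : Fin (0+1)) (o : Fin (nB+1)) (i : Fin (nY+1)) (o' : Fin (0+1)) =>
            ∑ b, TB0 b y i' o i o')
          = (fun _ _ i _ => if i = eY.symm y then (1:ℝ) else 0) := by
        funext i' o i o'
        simp only [hTB0]
        rw [← Finset.mul_sum]
        have h1 : (∑ b, if o = eB.symm b then (1:ℝ) else 0) = 1 := by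
          simp [Equiv.eq_symm_apply]
        rw [h1, mul_one]
      rw [hTy]
      refine ⟨?_, ?_, ?_⟩
      · simp [totOp, fin1, Fintype.card_fin]
      · funext i' o i o'
        simp [rrOpI, rrOpI', rrOpO, rrOpO', fin1, Fintype.card_fin]
        rw [← Finset.sum_div]
        simp [div_self hB0, one_div]
      · funext i' o i o'
        simp only [rrOpO', rrOpO, fin1, Fintype.card_fin, Nat.cast_one]
        rw [Finset.sum_const, Finset.card_univ, Fintype.card_fin, nsmul_eq_mul]
        push_cast
        rw [mul_div_cancel_left₀ _ hB0]
  · -- correlation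
    intro a b x y
    simp only [corr, hW0, hTA0, hTB0, fin1]
    rw [Fintype.sum_eq_single (eA.symm a) (by
      intro oa hoa
      simp [hoa])]
    rw [Fintype.sum_eq_single (eB.symm b) (by
      intro ob hob
      simp [hob])]
    rw [Fintype.sum_eq_single (eX.symm x) (by
      intro ia hia
      simp [hia])]
    rw [Fintype.sum_eq_single (eY.symm y) (by
      intro ib hib
      simp [hib])]
    simp [Equiv.apply_symm_apply]


end Boxworld

end
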